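/- Let P_3 denote the path with three vertices and two edges. A graph G satisfies G →_2 P_3 (every 2-coloring of the edges of G contains a monochromatic copy of P_3) if and only if G has a vertex of degree at least 3 or G contains an odd cycle. -/

import Mathlib

/-- The `n`-blowup of a graph: each vertex is replaced by an independent set of `n` vertices,
and each edge by a complete bipartite graph between the corresponding sets. -/
def blowupGraph {V : Type} (G : SimpleGraph V) (n : ℕ) : SimpleGraph (V × Fin n) :=
  SimpleGraph.comap Prod.fst G

/-- The coloring `C` admits a monochromatic copy of `H` in `G`. -/
def HasMonoCopy {V α : Type} (G : SimpleGraph V) (H : SimpleGraph α) {r : ℕ}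
    (C : Sym2 V → Fin r) : Prop :=
  ∃ (f : α → V) (c : Fin r), Function.Injective f ∧
    ∀ a b, H.Adj a b → G.Adj (f a) (f b) ∧ C s(f a, f b) = c

/-- `G →_r H`: every `r`-coloring of the edges of `G` contains a monochromatic copy of `H`. -/
def ArrowsFor {V α : Type} (G : SimpleGraph V) (H : SimpleGraph α) (r : ℕ) : Prop :=
  ∀ C : Sym2 V → Fin r, HasMonoCopy G H C

/-- The coloring `C` of `G[n]` admits a monochromatic canonical copy of `H[t]`:
an embedding `φ` of `H` into `G`, together with `t` blowup vertices `ψ a` in the part indexed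
by `φ a` for each vertex `a` of `H`, all of whose blowup edges receive the same color `c`. -/
def HasMonoCanonicalBlowup {V α : Type} (G : SimpleGraph V) (H : SimpleGraph α)
    (n t r : ℕ) (C : Sym2 (V × Fin n) → Fin r) : Prop :=
  ∃ (φ : α → V) (ψ : α → Fin t → Fin n) (c : Fin r),
    Function.Injective φ ∧ (∀ a, Function.Injective (ψ a)) ∧
    ∀ a b, H.Adj a b → G.Adj (φ a) (φ b) ∧ ∀ i j, C s((φ a, ψ a i), (φ b, ψ b j)) = c

/-- Every `r`-coloring of the edges of `G[n]` contains a monochromatic canonical copy of `H[t]`.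
The blowup Ramsey number `B_r(G → H; t)` is the minimum such `n`. -/
def BlowupArrow {V α : Type} (G : SimpleGraph V) (H : SimpleGraph α) (r n t : ℕ) : Prop :=
  ∀ C : Sym2 (V × Fin n) → Fin r, HasMonoCanonicalBlowup G H n t r C

section Helpers
open SimpleGraph Walk
open Fin.NatCast
lemma fin2_eq_add_one {a b : Fin 2} (h : a ≠ b) : b = a + 1 := by
  fin_cases a <;> fin_cases b <;> simp_all <;> rfl

lemma fin2_absurd {a b : Fin 2} (h1 : a ≠ b) (h2 : a ≠ b + 1) : False := by
  fin_cases a <;> fin_cases b <;> simp_all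

lemma fin2_add_one_ne (a : Fin 2) : a + 1 ≠ a := by fin_cases a <;> decide

lemma fin2_pigeon (a b c : Fin 2) : a = b ∨ a = c ∨ b = c := by
  fin_cases a <;> fin_cases b <;> fin_cases c <;> simp

lemma hasMonoCopy_path3_iff {V : Type} (G : SimpleGraph V) (C : Sym2 V → Fin 2) :
    HasMonoCopy G (SimpleGraph.pathGraph 3) C ↔
      ∃ x y z : V, x ≠ z ∧ G.Adj y x ∧ G.Adj y z ∧ C s(y, x) = C s(y, z) := by
  constructor
  · rintro ⟨f, c, hinj, hf⟩
    have h10 := hf 1 0 (by rw [pathGraph_adj]; simp)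
    have h12 := hf 1 2 (by rw [pathGraph_adj]; simp)
    exact ⟨f 0, f 1, f 2, fun h => by have := hinj h; simp at this,
      h10.1, h12.1, h10.2.trans h12.2.symm⟩
  · rintro ⟨x, y, z, hxz, hyx, hyz, hC⟩
    refine ⟨fun i => match i with | 0 => x | 1 => y | 2 => z, C s(y, x), ?_, ?_⟩
    · intro i j hij
      fin_cases i <;> fin_cases j <;>
        first
          | rfl
          | exact absurd hij hyx.ne.symm
          | exact absurd hij hyx.ne
          | exact absurd hij hyz.ne.symm
          | exact absurd hij hyz.ne
          | exact absurd hij hxz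
          | exact absurd hij hxz.symm
    · intro a b hab
      rw [pathGraph_adj] at hab
      fin_cases a <;> fin_cases b <;>
        first
          | (exfalso; revert hab; decide)
          | exact ⟨hyx.symm, by rw [Sym2.eq_swap]⟩
          | exact ⟨hyx, rfl⟩
          | exact ⟨hyz, hC.symm⟩
          | exact ⟨hyz.symm, by rw [Sym2.eq_swap]; exact hC.symm⟩

lemma good_ne {V : Type} {G : SimpleGraph V} {C : Sym2 V → Fin 2}
    (hC : ¬ HasMonoCopy G (SimpleGraph.pathGraph 3) C) {x y z : V}
    (hyx : G.Adj y x) (hyz : G.Adj y z) (hxz : x ≠ z) : C s(y, x) ≠ C s(y, z) := by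
  intro h
  exact hC ((hasMonoCopy_path3_iff G C).mpr ⟨x, y, z, hxz, hyx, hyz, h⟩)

lemma getVert_mem_support {V : Type} {G : SimpleGraph V} :
    ∀ {x y : V} (p : G.Walk x y) (i : ℕ), p.getVert i ∈ p.support
  | _, _, .nil, _ => by simp [Walk.getVert]
  | _, _, .cons h q, 0 => by simp [Walk.getVert]
  | _, _, .cons h q, (i+1) => by
      rw [Walk.getVert_cons_succ, Walk.support_cons]
      exact List.mem_cons_of_mem _ (getVert_mem_support q i)

lemma getVert_injOn' {V : Type} {G : SimpleGraph V} :
    ∀ {x y : V} (p : G.Walk x y), p.IsPath → ∀ i j, i ≤ p.length → j ≤ p.length →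
      p.getVert i = p.getVert j → i = j
  | _, _, .nil, _, i, j, hi, hj, _ => by
      simp only [Walk.length_nil, Nat.le_zero] at hi hj; omega
  | x, y, .cons h q, hp, i, j, hi, hj, hij => by
      rw [Walk.cons_isPath_iff] at hp
      match i, j with
      | 0, 0 => rfl
      | 0, (j+1) =>
          exfalso
          rw [Walk.getVert_zero, Walk.getVert_cons_succ] at hij
          exact hp.2 (hij ▸ _root_.getVert_mem_support q j)
      | (i+1), 0 =>
          exfalso
          rw [Walk.getVert_zero, Walk.getVert_cons_succ] at hij
          exact hp.2 (hij ▸ _root_.getVert_mem_support q i)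
      | (i+1), (j+1) =>
          have := getVert_injOn' q hp.1 i j (by simpa using hi) (by simpa using hj)
            (by simpa [Walk.getVert_cons_succ] using hij)
          omega

/-- Forced alternation of edge colors along a trail, under a coloring with no
monochromatic `P₃`. -/
lemma alt_walk {V : Type} {G : SimpleGraph V} {C : Sym2 V → Fin 2}
    (hC : ¬ HasMonoCopy G (SimpleGraph.pathGraph 3) C) :
    ∀ {x y : V} (p : G.Walk x y), p.IsTrail → ¬ p.Nil →
      C s(p.getVert (p.length - 1), y) = C s(x, p.getVert 1) + ((p.length + 1 : ℕ) : Fin 2) := by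
  intro x y p
  induction p with
  | nil => intro _ hn; exact absurd Walk.nil_nil hn
  | @cons x x1 y h q ih =>
    intro ht _
    cases q with
    | nil =>
      simp only [Walk.length_cons, Walk.length_nil, Nat.zero_add, Nat.sub_self,
        Walk.getVert_zero, Walk.getVert_cons_succ]
      norm_num
      rfl
    | @cons _ x2 _ h' q' =>
      have ht' : (Walk.cons h' q').IsTrail := ht.of_cons
      have hne : x ≠ x2 := by
        intro hxx
        have hnodup := ht.edges_nodup
        rw [Walk.edges_cons, Walk.edges_cons] at hnodup
        have : s(x, x1) ≠ s(x1, x2) := by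
          intro he
          exact (List.nodup_cons.mp hnodup).1 (by rw [he]; exact List.mem_cons_self)
        exact this (by rw [hxx, Sym2.eq_swap])
      have hcol : C s(x1, x2) = C s(x, x1) + 1 := by
        apply fin2_eq_add_one
        have := good_ne hC (z := x2) h.symm h' hne
        rwa [Sym2.eq_swap] at this
      have hnn : ¬ (Walk.cons h' q').Nil := by simp
      have hIH := ih ht' hnn
      have hlen : (Walk.cons h (Walk.cons h' q')).length = q'.length + 2 := by
        simp [Walk.length_cons]
      rw [hlen]
      have hgv : (Walk.cons h (Walk.cons h' q')).getVert (q'.length + 2 - 1)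
          = (Walk.cons h' q').getVert ((Walk.cons h' q').length - 1) := by
        rw [show q'.length + 2 - 1 = q'.length + 1 from rfl, Walk.getVert_cons_succ]
        simp [Walk.length_cons]
      rw [hgv, hIH]
      have hgv1 : (Walk.cons h' q').getVert 1 = x2 := by simp
      have hgv1' : (Walk.cons h (Walk.cons h' q')).getVert 1 = x1 :=
        by simp
      rw [hgv1, hgv1', hcol]
      simp only [Walk.length_cons]
      push_cast
      generalize C s(x, x1) = a
      generalize ((q'.length : ℕ) : Fin 2) = m
      revert a m
      decide

/-- Gluing lemma: extending a good coloring of `G - uv` across the edge `uv`. -/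
lemma update_good {V : Type} [DecidableEq V] {G : SimpleGraph V} {u v : V}
    (huv : G.Adj u v) {C' : Sym2 V → Fin 2}
    (hC' : ¬ HasMonoCopy (G.deleteEdges {s(u, v)}) (SimpleGraph.pathGraph 3) C')
    (b : Fin 2)
    (hu : ∀ z, (G.deleteEdges {s(u, v)}).Adj u z → C' s(u, z) ≠ b)
    (hv : ∀ z, (G.deleteEdges {s(u, v)}).Adj v z → C' s(v, z) ≠ b) :
    ¬ HasMonoCopy G (SimpleGraph.pathGraph 3) (Function.update C' s(u, v) b) := by
  set G' := G.deleteEdges {s(u, v)} with hG'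
  set C := Function.update C' s(u, v) b with hCdef
  intro hcopy
  obtain ⟨x, y, z, hxz, hyx, hyz, hcol⟩ := (hasMonoCopy_path3_iff G C).mp hcopy
  by_cases h1 : s(y, x) = s(u, v) <;> by_cases h2 : s(y, z) = s(u, v)
  · exact hxz (Sym2.congr_right.mp (h1.trans h2.symm))
  · -- s(y,x) is the new edge
    have hGz : G'.Adj y z := by rw [hG', SimpleGraph.deleteEdges_adj]; exact ⟨hyz, by simp [h2]⟩
    have hcyx : C s(y, x) = b := by rw [hCdef, h1]; exact Function.update_self _ _ _
    have hcyz : C s(y, z) = C' s(y, z) := by rw [hCdef]; exact Function.update_of_ne h2 _ _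
    rcases Sym2.eq_iff.mp h1 with ⟨rfl, rfl⟩ | ⟨rfl, rfl⟩
    · exact hu z hGz (by rw [← hcyz, ← hcol, hcyx])
    · exact hv z hGz (by rw [← hcyz, ← hcol, hcyx])
  · have hGx : G'.Adj y x := by rw [hG', SimpleGraph.deleteEdges_adj]; exact ⟨hyx, by simp [h1]⟩
    have hcyz : C s(y, z) = b := by rw [hCdef, h2]; exact Function.update_self _ _ _
    have hcyx : C s(y, x) = C' s(y, x) := by rw [hCdef]; exact Function.update_of_ne h1 _ _
    rcases Sym2.eq_iff.mp h2 with ⟨rfl, rfl⟩ | ⟨rfl, rfl⟩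
    · exact hu x hGx (by rw [← hcyx, hcol, hcyz])
    · exact hv x hGx (by rw [← hcyx, hcol, hcyz])
  · have hGx : G'.Adj y x := by rw [hG', SimpleGraph.deleteEdges_adj]; exact ⟨hyx, by simp [h1]⟩
    have hGz : G'.Adj y z := by rw [hG', SimpleGraph.deleteEdges_adj]; exact ⟨hyz, by simp [h2]⟩
    apply hC'
    rw [hasMonoCopy_path3_iff]
    refine ⟨x, y, z, hxz, hGx, hGz, ?_⟩
    have e1 : C s(y, x) = C' s(y, x) := by rw [hCdef]; exact Function.update_of_ne h1 _ _
    have e2 : C s(y, z) = C' s(y, z) := by rw [hCdef]; exact Function.update_of_ne h2 _ _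
    rw [← e1, ← e2, hcol]

lemma ncard_neighborSet_eq_degree {V : Type} [Fintype V] (G : SimpleGraph V)
    [DecidableRel G.Adj] (v : V) : (G.neighborSet v).ncard = G.degree v := by
  rw [SimpleGraph.degree, SimpleGraph.neighborFinset_def, Set.ncard_eq_toFinset_card']

/-- In a finite graph, a vertex of odd degree can reach another vertex of odd degree. -/
lemma exists_reach {V : Type} [Fintype V] [DecidableEq V] (H : SimpleGraph V) (u : V)
    (hu : Odd (H.neighborSet u).ncard) :
    ∃ w, w ≠ u ∧ H.Reachable u w ∧ Odd (H.neighborSet w).ncard := by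
  classical
  set K : SimpleGraph V :=
    { Adj := fun x y => H.Adj x y ∧ H.Reachable u x ∧ H.Reachable u y
      symm := ⟨fun x y ⟨h1, h2, h3⟩ => ⟨h1.symm, h3, h2⟩⟩
      loopless := ⟨fun x hx => H.loopless.irrefl x hx.1⟩ } with hK
  have hKns : ∀ x, H.Reachable u x → K.neighborSet x = H.neighborSet x := by
    intro x hx
    ext z
    simp only [SimpleGraph.mem_neighborSet, hK]
    exact ⟨fun h => h.1, fun h => ⟨h, hx, hx.trans h.reachable⟩⟩
  have hKu : Odd (K.degree u) := by
    rw [← ncard_neighborSet_eq_degree, hKns u (SimpleGraph.Reachable.refl u)]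
    exact hu
  have hodd := K.odd_card_odd_degree_vertices_ne u hKu
  have hpos : 0 < ({w : V | w ≠ u ∧ Odd (K.degree w)} : Finset V).card := by
    rcases hodd with ⟨k, hk⟩
    omega
  obtain ⟨w, hw⟩ := Finset.card_pos.mp hpos
  simp only [Finset.mem_filter, Finset.mem_univ, true_and] at hw
  obtain ⟨hwu, hwodd⟩ := hw
  have hKw : 0 < K.degree w := hwodd.pos
  rw [← ncard_neighborSet_eq_degree, Set.ncard_pos] at hKw
  obtain ⟨z, hz⟩ := hKw
  have hreach : H.Reachable u w := hz.2.1
  refine ⟨w, hwu, hreach, ?_⟩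
  rw [← hKns w hreach, ncard_neighborSet_eq_degree]
  exact hwodd

lemma noOdd_mono {V : Type} {G' G : SimpleGraph V} (h : G' ≤ G)
    (hG : ∀ (v : V) (w : G.Walk v v), w.IsCycle → ¬ Odd w.length) :
    ∀ (v : V) (w : G'.Walk v v), w.IsCycle → ¬ Odd w.length := by
  intro v w hw hodd
  exact hG v (w.mapLe h) (hw.mapLe h) (by rwa [Walk.mapLe, Walk.length_map])

lemma fin2_natCast_mod : ∀ m : ℕ, ((m : Fin 2)) = ((m % 2 : ℕ) : Fin 2)
  | 0 => rfl
  | 1 => rfl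
  | (m + 2) => by
      have h1 : (m + 2) % 2 = m % 2 := by omega
      rw [h1, ← fin2_natCast_mod m]
      have h2 : ((m + 2 : ℕ) : Fin 2) = ((m : ℕ) : Fin 2) + ((2 : ℕ) : Fin 2) := by
        push_cast; ring
      rw [h2, show ((2 : ℕ) : Fin 2) = 0 from rfl, add_zero]

lemma del_adj {V : Type} {G : SimpleGraph V} {s : Set (Sym2 V)} {x y : V} :
    (G.deleteEdges s).Adj x y ↔ G.Adj x y ∧ s(x, y) ∉ s :=
  SimpleGraph.deleteEdges_adj

lemma good_of_edgeless {V : Type} {G : SimpleGraph V} (h : ∀ x y, ¬ G.Adj x y) :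
    ¬ HasMonoCopy G (SimpleGraph.pathGraph 3) (fun _ => (0 : Fin 2)) := by
  rw [hasMonoCopy_path3_iff]
  rintro ⟨x, y, z, _, hyx, _, _⟩
  exact h y x hyx

lemma exists_good_coloring {V : Type} [Fintype V] [DecidableEq V] :
    ∀ (n : ℕ) (G : SimpleGraph V),
      G.edgeSet.ncard ≤ n →
      (∀ v, (G.neighborSet v).ncard ≤ 2) →
      (∀ (v : V) (w : G.Walk v v), w.IsCycle → ¬ Odd w.length) →
      ∃ C : Sym2 V → Fin 2, ¬ HasMonoCopy G (SimpleGraph.pathGraph 3) C := by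
  intro n
  induction n with
  | zero =>
    intro G hcard _ _
    refine ⟨_, good_of_edgeless fun x y hxy => ?_⟩
    have hempty : G.edgeSet = ∅ := (Set.ncard_eq_zero G.edgeSet.toFinite).mp (Nat.le_zero.mp hcard)
    have hmem : s(x, y) ∈ G.edgeSet := G.mem_edgeSet.mpr hxy
    rw [hempty] at hmem
    exact hmem
  | succ n ih =>
    intro G hcard hdeg hnoodd
    by_cases h0 : G.edgeSet = ∅
    · refine ⟨_, good_of_edgeless fun x y hxy => ?_⟩
      have hmem : s(x, y) ∈ G.edgeSet := G.mem_edgeSet.mpr hxy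
      rw [h0] at hmem
      exact hmem
    by_cases hdeg1 : ∃ w, (G.neighborSet w).ncard = 1
    · -- Case 1: a vertex of degree one
      obtain ⟨w0, hw0⟩ := hdeg1
      obtain ⟨w1, hset⟩ := Set.ncard_eq_one.mp hw0
      have hadj : G.Adj w0 w1 := by
        have : w1 ∈ G.neighborSet w0 := by rw [hset]; exact Set.mem_singleton _
        exact this
      set G' := G.deleteEdges {s(w1, w0)} with hG'def
      have hle : G' ≤ G := SimpleGraph.deleteEdges_le _
      have hcard' : G'.edgeSet.ncard ≤ n := by
        rw [hG'def, SimpleGraph.edgeSet_deleteEdges]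
        have hmem : s(w1, w0) ∈ G.edgeSet := G.mem_edgeSet.mpr hadj.symm
        have := Set.ncard_diff_singleton_lt_of_mem hmem G.edgeSet.toFinite
        omega
      have hdeg' : ∀ v, (G'.neighborSet v).ncard ≤ 2 := fun v =>
        le_trans (Set.ncard_le_ncard (fun z hz => (del_adj.mp hz).1)
          (G.neighborSet v).toFinite) (hdeg v)
      obtain ⟨C', hC'⟩ := ih G' hcard' hdeg' (noOdd_mono hle hnoodd)
      -- w1 has at most one remaining neighbor in G'
      have hone : (G'.neighborSet w1).ncard ≤ 1 := by
        have hsub : G'.neighborSet w1 ⊆ G.neighborSet w1 \ {w0} := by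
          intro z hz
          obtain ⟨h1, h2⟩ := del_adj.mp hz
          refine ⟨h1, fun hzw => ?_⟩
          apply h2
          rw [Set.mem_singleton_iff] at hzw
          rw [hzw]
          rfl
        calc (G'.neighborSet w1).ncard ≤ (G.neighborSet w1 \ {w0}).ncard :=
              Set.ncard_le_ncard hsub ((G.neighborSet w1).toFinite.diff)
          _ = (G.neighborSet w1).ncard - 1 :=
              Set.ncard_diff_singleton_of_mem (show w0 ∈ G.neighborSet w1 from hadj.symm)
          _ ≤ 1 := by have := hdeg w1; omega
      have hvempty : ∀ z, ¬ G'.Adj w0 z := by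
        intro z hz
        obtain ⟨h1, h2⟩ := del_adj.mp hz
        have hzG : z ∈ G.neighborSet w0 := h1
        rw [hset, Set.mem_singleton_iff] at hzG
        apply h2
        rw [hzG, Sym2.eq_swap]
        rfl
      by_cases hne : (G'.neighborSet w1).Nonempty
      · obtain ⟨a, ha⟩ := hne
        refine ⟨_, update_good hadj.symm hC' (C' s(w1, a) + 1) ?_ ?_⟩
        · intro z hz
          have hza : z = a :=
            (Set.ncard_le_one (G'.neighborSet w1).toFinite).mp hone z (by exact hz) a ha
          rw [hza]
          exact (fin2_add_one_ne _).symm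
        · intro z hz
          exact absurd hz (hvempty z)
      · refine ⟨_, update_good hadj.symm hC' 0 ?_ ?_⟩
        · intro z hz
          exact absurd ⟨z, hz⟩ hne
        · intro z hz
          exact absurd hz (hvempty z)
    · -- Case 2: all degrees are 0 or 2
      push_neg at hdeg1
      have h02 : ∀ w, (G.neighborSet w).ncard = 0 ∨ (G.neighborSet w).ncard = 2 := by
        intro w
        have h1 := hdeg w
        have h2 := hdeg1 w
        omega
      obtain ⟨u, v, huv⟩ : ∃ x y, G.Adj x y := by
        obtain ⟨e, he⟩ := Set.nonempty_iff_ne_empty.mpr h0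
        revert he
        refine e.ind fun x y he => ?_
        exact ⟨x, y, G.mem_edgeSet.mp he⟩
      set G' := G.deleteEdges {s(u, v)} with hG'def
      have hle : G' ≤ G := SimpleGraph.deleteEdges_le _
      have hcard' : G'.edgeSet.ncard ≤ n := by
        rw [hG'def, SimpleGraph.edgeSet_deleteEdges]
        have hmem : s(u, v) ∈ G.edgeSet := G.mem_edgeSet.mpr huv
        have := Set.ncard_diff_singleton_lt_of_mem hmem G.edgeSet.toFinite
        omega
      have hdeg' : ∀ v', (G'.neighborSet v').ncard ≤ 2 := fun v' =>
        le_trans (Set.ncard_le_ncard (fun z hz => (del_adj.mp hz).1)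
          (G.neighborSet v').toFinite) (hdeg v')
      obtain ⟨C', hC'⟩ := ih G' hcard' hdeg' (noOdd_mono hle hnoodd)
      have hnu : G'.neighborSet u = G.neighborSet u \ {v} := by
        ext z
        simp only [SimpleGraph.mem_neighborSet, Set.mem_diff, Set.mem_singleton_iff]
        rw [del_adj]
        constructor
        · rintro ⟨h1, h2⟩
          exact ⟨h1, fun hzv => h2 (by rw [hzv]; rfl)⟩
        · rintro ⟨h1, h2⟩
          refine ⟨h1, fun hmem => ?_⟩
          rw [Set.mem_singleton_iff] at hmem
          exact h2 (Sym2.congr_right.mp hmem)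
      have hnv : G'.neighborSet v = G.neighborSet v \ {u} := by
        ext z
        simp only [SimpleGraph.mem_neighborSet, Set.mem_diff, Set.mem_singleton_iff]
        rw [del_adj]
        constructor
        · rintro ⟨h1, h2⟩
          exact ⟨h1, fun hzu => h2 (by rw [hzu, Sym2.eq_swap]; rfl)⟩
        · rintro ⟨h1, h2⟩
          refine ⟨h1, fun hmem => ?_⟩
          rw [Set.mem_singleton_iff, Sym2.eq_swap] at hmem
          exact h2 (Sym2.congr_left.mp hmem)
      have hcu : (G.neighborSet u).ncard = 2 := by
        refine (h02 u).resolve_left fun hc => ?_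
        have : 0 < (G.neighborSet u).ncard := (Set.ncard_pos (Set.toFinite _)).mpr ⟨v, huv⟩
        omega
      have hcv : (G.neighborSet v).ncard = 2 := by
        refine (h02 v).resolve_left fun hc => ?_
        have : 0 < (G.neighborSet v).ncard := (Set.ncard_pos (Set.toFinite _)).mpr ⟨u, huv.symm⟩
        omega
      have hcu' : (G'.neighborSet u).ncard = 1 := by
        rw [hnu, Set.ncard_diff_singleton_of_mem (show v ∈ G.neighborSet u from huv), hcu]
      have hcv' : (G'.neighborSet v).ncard = 1 := by
        rw [hnv, Set.ncard_diff_singleton_of_mem (show u ∈ G.neighborSet v from huv.symm), hcv]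
      -- u can reach v in G'
      obtain ⟨w, hwu, hreach, hwodd⟩ := exists_reach G' u (by rw [hcu']; exact odd_one)
      have hwv : w = v := by
        by_contra hne
        have hsame : G'.neighborSet w = G.neighborSet w := by
          ext z
          simp only [SimpleGraph.mem_neighborSet]
          rw [del_adj]
          constructor
          · exact fun hz => hz.1
          · intro hz
            refine ⟨hz, fun hmem => ?_⟩
            rw [Set.mem_singleton_iff] at hmem
            rcases Sym2.eq_iff.mp hmem with ⟨rfl, rfl⟩ | ⟨rfl, rfl⟩
            · exact hwu rfl
            · exact hne rfl
        rw [hsame] at hwodd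
        obtain ⟨k, hk⟩ := hwodd
        rcases h02 w with h | h <;> omega
      rw [hwv] at hreach
      obtain ⟨p0⟩ := hreach
      set p := p0.bypass with hpdef
      have hp : p.IsPath := p0.bypass_isPath
      have hlen0 : p.length ≠ 0 := fun h => huv.ne (Walk.eq_of_length_eq_zero h)
      -- closing up p gives a cycle, so p has odd length
      have hodd : Odd p.length := by
        set q := p.mapLe hle with hqdef
        have hq : q.IsPath := hp.mapLe hle
        have hmem : s(v, u) ∉ q.edges := by
          intro hmem
          rw [hqdef, Walk.mapLe, Walk.edges_map] at hmem
          obtain ⟨e', he', heq⟩ := List.mem_map.mp hmem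
          simp only [SimpleGraph.Hom.ofLE_apply, Sym2.map_id', id] at heq
          subst heq
          have hE := p.edges_subset_edgeSet he'
          rw [hG'def, SimpleGraph.edgeSet_deleteEdges] at hE
          exact hE.2 (by rw [Sym2.eq_swap]; rfl)
        have hcyc : (Walk.cons huv.symm q).IsCycle :=
          (Walk.cons_isCycle_iff q huv.symm).mpr ⟨hq, hmem⟩
        have hnodd := hnoodd v (Walk.cons huv.symm q) hcyc
        rw [Walk.length_cons] at hnodd
        have hql : q.length = p.length := Walk.length_map _ _
        rw [Nat.odd_iff] at hnodd ⊢
        omega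
      -- unique neighbors in G'
      obtain ⟨a, hA⟩ := Set.ncard_eq_one.mp hcu'
      obtain ⟨bb, hB⟩ := Set.ncard_eq_one.mp hcv'
      have hga : p.getVert 1 = a := by
        have h1 : G'.Adj u (p.getVert 1) := by
          have := p.adj_getVert_succ (i := 0) (by omega)
          rwa [Walk.getVert_zero] at this
        have : p.getVert 1 ∈ G'.neighborSet u := h1
        rwa [hA, Set.mem_singleton_iff] at this
      have hgb : p.getVert (p.length - 1) = bb := by
        have hlt : p.length - 1 < p.length := by omega
        have h1 := p.adj_getVert_succ hlt
        rw [show p.length - 1 + 1 = p.length by omega, Walk.getVert_length] at h1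
        have : p.getVert (p.length - 1) ∈ G'.neighborSet v := h1.symm
        rwa [hB, Set.mem_singleton_iff] at this
      have halt := alt_walk hC' p hp.isTrail
        (Walk.not_nil_iff_lt_length.mpr (by omega))
      rw [hga, hgb] at halt
      have hcast : ((p.length + 1 : ℕ) : Fin 2) = 0 := by
        rw [fin2_natCast_mod]
        rw [Nat.odd_iff] at hodd
        rw [show (p.length + 1) % 2 = 0 by omega]
        rfl
      rw [hcast, add_zero] at halt
      -- glue
      refine ⟨_, update_good huv hC' (C' s(u, a) + 1) ?_ ?_⟩
      · intro z hz
        have hza : z = a := by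
          have : z ∈ G'.neighborSet u := hz
          rwa [hA, Set.mem_singleton_iff] at this
        rw [hza]
        exact (fin2_add_one_ne _).symm
      · intro z hz
        have hzb : z = bb := by
          have : z ∈ G'.neighborSet v := hz
          rwa [hB, Set.mem_singleton_iff] at this
        rw [hzb, Sym2.eq_swap, halt]
        exact (fin2_add_one_ne _).symm


/-- `G →₂ P₃` if and only if `G` has a vertex of degree at least `3` or `G`
contains an odd cycle. -/
theorem arrows_path_three_iff
    (V : Type) [Fintype V] [DecidableEq V] (G : SimpleGraph V) [DecidableRel G.Adj] :
    ArrowsFor G (SimpleGraph.pathGraph 3) 2 ↔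
      ((∃ v, 3 ≤ G.degree v) ∨
        ∃ (v : V) (w : G.Walk v v), w.IsCycle ∧ Odd w.length) := by
  constructor
  · intro hArr
    by_contra hcon
    push_neg at hcon
    obtain ⟨hdeg, hcyc⟩ := hcon
    have hdeg' : ∀ v, (G.neighborSet v).ncard ≤ 2 := by
      intro v
      rw [ncard_neighborSet_eq_degree]
      have := hdeg v
      omega
    have hcyc' : ∀ (v : V) (w : G.Walk v v), w.IsCycle → ¬ Odd w.length := by
      intro v w hw
      exact hcyc v w hw
    obtain ⟨C, hC⟩ := exists_good_coloring G.edgeSet.ncard G le_rfl hdeg' hcyc'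
    exact hC (hArr C)
  · rintro (⟨v, hv⟩ | ⟨v, w, hcyc, hodd⟩) <;> intro C
    · -- a vertex of degree at least three
      have hcard : 3 ≤ (G.neighborFinset v).card := hv
      obtain ⟨a, ha⟩ := Finset.card_pos.mp (show 0 < (G.neighborFinset v).card by omega)
      have h2 : 1 < ((G.neighborFinset v).erase a).card := by
        rw [Finset.card_erase_of_mem ha]; omega
      obtain ⟨b, hb, c, hc, hbc⟩ := Finset.one_lt_card.mp h2
      have hba : b ≠ a := (Finset.mem_erase.mp hb).1
      have hca : c ≠ a := (Finset.mem_erase.mp hc).1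
      have hbmem := Finset.mem_of_mem_erase hb
      have hcmem := Finset.mem_of_mem_erase hc
      have hadja : G.Adj v a := (SimpleGraph.mem_neighborFinset G v a).mp ha
      have hadjb : G.Adj v b := (SimpleGraph.mem_neighborFinset G v b).mp hbmem
      have hadjc : G.Adj v c := (SimpleGraph.mem_neighborFinset G v c).mp hcmem
      rcases fin2_pigeon (C s(v, a)) (C s(v, b)) (C s(v, c)) with h | h | h
      · exact (hasMonoCopy_path3_iff G C).mpr ⟨a, v, b, hba.symm, hadja, hadjb, h⟩
      · exact (hasMonoCopy_path3_iff G C).mpr ⟨a, v, c, hca.symm, hadja, hadjc, h⟩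
      · exact (hasMonoCopy_path3_iff G C).mpr ⟨b, v, c, hbc, hadjb, hadjc, h⟩
    · -- an odd cycle
      by_contra hno
      cases w with
      | nil => exact hcyc.ne_nil rfl
      | @cons _ x1 _ h q =>
        obtain ⟨hqpath, hqe⟩ := (Walk.cons_isCycle_iff q h).mp hcyc
        have hlen3 := hcyc.three_le_length
        rw [Walk.length_cons] at hlen3 hodd
        have halt := alt_walk hno q hqpath.isTrail
          (Walk.not_nil_iff_lt_length.mpr (by omega))
        have hcast : ((q.length + 1 : ℕ) : Fin 2) = 1 := by
          rw [fin2_natCast_mod]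
          rw [Nat.odd_iff] at hodd
          rw [show (q.length + 1) % 2 = 1 from hodd]
          exact Nat.cast_one
        rw [hcast] at halt
        have hadj1 : G.Adj x1 (q.getVert 1) := by
          have := q.adj_getVert_succ (i := 0) (by omega)
          rwa [Walk.getVert_zero] at this
        have hne1 : v ≠ q.getVert 1 := by
          intro hv1
          have : q.length = 1 := by
            apply getVert_injOn' q hqpath q.length 1 le_rfl (by omega)
            rw [Walk.getVert_length]
            exact hv1
          omega
        have hd1 : C s(x1, v) ≠ C s(x1, q.getVert 1) :=
          good_ne hno h.symm hadj1 hne1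
        have hadj2 : G.Adj v (q.getVert (q.length - 1)) := by
          have h1 := q.adj_getVert_succ (i := q.length - 1) (by omega)
          rw [show q.length - 1 + 1 = q.length by omega, Walk.getVert_length] at h1
          exact h1.symm
        have hne2 : x1 ≠ q.getVert (q.length - 1) := by
          intro hx1
          have : (0 : ℕ) = q.length - 1 := by
            apply getVert_injOn' q hqpath 0 (q.length - 1) (by omega) (by omega)
            rw [Walk.getVert_zero]
            exact hx1
          omega
        have hd2 : C s(v, x1) ≠ C s(v, q.getVert (q.length - 1)) :=
          good_ne hno h hadj2 hne2
        rw [Sym2.eq_swap] at hd1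
        rw [show s(v, q.getVert (q.length - 1)) = s(q.getVert (q.length - 1), v) from
          Sym2.eq_swap, halt] at hd2
        exact fin2_absurd hd1 hd2

end Helpers
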